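/- The statistically reaping number 𝔯_* is at most the covering number of the strong measure zero ideal, cov(𝒮𝒩). -/

import Mathlib

open Filter Cardinal

/-- `S ⊆ ℕ` is moderate: its relative density stays bounded away from `0`
and `1`. -/
def Moderate (S : Set ℕ) : Prop :=
  0 < Filter.liminf (fun n : ℕ => ((S ∩ Set.Iio n).ncard : ℝ) / n) atTop ∧
  Filter.limsup (fun n : ℕ => ((S ∩ Set.Iio n).ncard : ℝ) / n) atTop < 1

/-- The statistical density ratio `n·|S∩X∩n| / (|S∩n|·|X∩n|)`. -/
noncomputable def statRatio (S X : Set ℕ) (n : ℕ) : ℝ :=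
  (n * (S ∩ X ∩ Set.Iio n).ncard : ℝ) /
    ((S ∩ Set.Iio n).ncard * (X ∩ Set.Iio n).ncard)

/-- The statistically reaping (refining) number `𝔯_*`: the least size of a
family `F` of infinite subsets of ℕ such that no moderate infinite `S`
statistically refines every member of `F`. -/
noncomputable def rStar : Cardinal :=
  sInf {c : Cardinal | ∃ F : Set (Set ℕ), (∀ X ∈ F, X.Infinite) ∧
    (¬ ∃ S : Set ℕ, S.Infinite ∧ Moderate S ∧
      ∀ X ∈ F, Tendsto (statRatio S X) atTop (nhds 1)) ∧ #F = c}

/-- `Z ⊆ ℝ` has strong measure zero: for every sequence of positive reals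
`ε` there are open intervals of length at most `ε n` covering `Z`. -/
def HasSMZ (Z : Set ℝ) : Prop :=
  ∀ ε : ℕ → ℝ, (∀ n, 0 < ε n) → ∃ a b : ℕ → ℝ,
    (∀ n, b n - a n ≤ ε n) ∧ Z ⊆ ⋃ n, Set.Ioo (a n) (b n)

/-- `cov(𝒮𝒩)`: the least number of strong measure zero sets covering ℝ. -/
noncomputable def covSMZ : Cardinal :=
  sInf {c : Cardinal | ∃ C : Set (Set ℝ), (∀ Z ∈ C, HasSMZ Z) ∧
    ⋃₀ C = Set.univ ∧ #C = c}

open Filter Finset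
open scoped Classical

def bitSum (b : ℕ → Bool) : ℕ → ℕ
  | 0 => 0
  | n+1 => (cond (b n) 1 0) * 2^n + bitSum b n

lemma bitSum_eq_sum (b : ℕ → Bool) (n : ℕ) :
    bitSum b n = ∑ t ∈ range n, cond (b t) (2^t) 0 := by
  induction n with
  | zero => simp [bitSum]
  | succ n ih =>
    rw [Finset.sum_range_succ, ← ih]
    show (cond (b n) 1 0) * 2^n + bitSum b n = _
    cases b n <;> simp [add_comm]

noncomputable def eN (S : Set ℕ) (n : ℕ) : ℕ :=
  bitSum (fun t => decide ((n - 1 - t) ∈ S)) n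

noncomputable def hf : ℕ → ℝ := fun i => (1/2)^(i+1)

lemma hf_pos (i : ℕ) : 0 < hf i := by unfold hf; positivity

lemma summable_hf : Summable hf := by
  have h : hf = fun i => (1/2 : ℝ) * (1/2)^i := by
    funext i; rw [hf, pow_succ]; ring
  rw [h]
  exact summable_geometric_two.mul_left _

lemma tsum_hf_add (n : ℕ) : ∑' i, hf (i + n) = (1/2)^n := by
  have h1 : ∀ i, hf (i + n) = (1/2)^n * hf i := by
    intro i; simp only [hf]; rw [← pow_add]; ring_nf
  calc ∑' i, hf (i + n) = ∑' i, (1/2)^n * hf i := by simp only [h1]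
  _ = (1/2)^n * ∑' i, hf i := summable_hf.tsum_mul_left _
  _ = (1/2)^n * 1 := by
      congr 1
      have h2 : ∑' i : ℕ, ((1:ℝ)/2)^i = 2 := by
        rw [tsum_geometric_of_lt_one (by norm_num) (by norm_num)]; norm_num
      calc ∑' i, hf i = ∑' i : ℕ, ((1:ℝ)/2)^i * (1/2) := by
            simp only [hf, pow_succ]
      _ = 2 * (1/2) := by rw [tsum_mul_right, h2]
      _ = 1 := by norm_num
  _ = (1/2)^n := mul_one _

noncomputable def enc (S : Set ℕ) : ℝ := ∑' i, S.indicator hf i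

lemma summable_ind (S : Set ℕ) : Summable (S.indicator hf) :=
  summable_hf.indicator S

lemma ind_nonneg (S : Set ℕ) (i : ℕ) : 0 ≤ S.indicator hf i :=
  Set.indicator_nonneg (fun j _ => (hf_pos j).le) i

lemma enc_key (S : Set ℕ) (n : ℕ) :
    (eN S n : ℝ) ≤ 2^n * enc S ∧ 2^n * enc S ≤ eN S n + 1 := by
  have hsum := summable_ind S
  have hsplit : (∑ i ∈ range n, S.indicator hf i) + (∑' i, S.indicator hf (i + n))
      = enc S := hsum.sum_add_tsum_nat_add n
  set T := ∑' i, S.indicator hf (i + n) with hT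
  have hT0 : 0 ≤ T := tsum_nonneg (fun i => ind_nonneg S _)
  have hT1 : T ≤ (1/2)^n := by
    rw [← tsum_hf_add n]
    exact Summable.tsum_le_tsum (fun i => Set.indicator_le_self' (fun j _ => (hf_pos j).le) _)
      ((summable_nat_add_iff n).mpr hsum) ((summable_nat_add_iff n).mpr summable_hf)
  have hhead : (2:ℝ)^n * (∑ i ∈ range n, S.indicator hf i) = eN S n := by
    rw [Finset.mul_sum]
    have h1 : ∀ i ∈ range n, (2:ℝ)^n * S.indicator hf i
        = (if i ∈ S then ((2:ℝ))^(n - 1 - i) else 0) := by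
      intro i hi
      have hi' : i < n := Finset.mem_range.mp hi
      have hexp : (n - 1 - i) + (i + 1) = n := by omega
      have h2 : (2:ℝ)^n * hf i = 2^(n-1-i) := by
        simp only [hf]
        rw [← hexp, pow_add]
        field_simp
        rw [hexp, mul_assoc, ← mul_pow]; norm_num
      by_cases h : i ∈ S <;> simp [Set.indicator, h, h2]
    rw [Finset.sum_congr rfl h1]
    have h3 : (eN S n : ℝ) = ∑ t ∈ range n,
        (if (n - 1 - t) ∈ S then ((2:ℝ))^t else 0) := by
      rw [eN, bitSum_eq_sum]
      push_cast
      apply Finset.sum_congr rfl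
      intro t _
      by_cases h : (n - 1 - t) ∈ S <;> simp [h]
    rw [h3, ← Finset.sum_range_reflect]
    apply Finset.sum_congr rfl
    intro t ht
    have ht' : t < n := Finset.mem_range.mp ht
    have : n - 1 - (n - 1 - t) = t := by omega
    rw [this]
  constructor
  · have h4 : (eN S n : ℝ) = 2^n * enc S - 2^n * T := by
      rw [← hsplit]; rw [mul_add, ← hhead]; ring
    rw [h4]
    nlinarith [pow_pos (by norm_num : (0:ℝ) < 2) n]
  · have h2 : (2:ℝ)^n * T ≤ 1 := by
      calc (2:ℝ)^n * T ≤ 2^n * (1/2)^n := by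
            nlinarith [pow_pos (by norm_num : (0:ℝ) < 2) n]
      _ = 1 := by rw [← mul_pow]; norm_num
    have h5 : (2:ℝ)^n * enc S = eN S n + 2^n * T := by
      rw [← hsplit, mul_add, ← hhead]
    rw [h5]; linarith

/-- scale sequence -/
def Nsc : ℕ → ℕ
  | 0 => 1
  | k+1 => 8 * (k+2) * Nsc k

lemma Nsc_pos (k : ℕ) : 0 < Nsc k := by
  induction k with
  | zero => simp [Nsc]
  | succ k ih => simp [Nsc]; positivity

lemma Nsc_lt_succ (k : ℕ) : Nsc k < Nsc (k+1) := by
  have := Nsc_pos k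
  calc Nsc k < 2 * Nsc k := by omega
  _ ≤ 8 * (k+2) * Nsc k := by nlinarith
  _ = Nsc (k+1) := rfl

lemma Nsc_strictMono : StrictMono Nsc := strictMono_nat_of_lt_succ Nsc_lt_succ

lemma Nsc_block (k : ℕ) : Nsc k + 4*((k+1)*Nsc k) ≤ Nsc (k+1) := by
  have := Nsc_pos k
  show _ ≤ 8 * (k+2) * Nsc k
  nlinarith

lemma le_Nsc (k : ℕ) : k + 1 ≤ Nsc k := by
  induction k with
  | zero => simp [Nsc]
  | succ k ih => show k + 2 ≤ 8 * (k+2) * Nsc k; nlinarith [Nsc_pos k]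

/-- binary sum -/
lemma bitSum_lt (b : ℕ → Bool) (n : ℕ) : bitSum b n < 2^n := by
  induction n with
  | zero => simp [bitSum]
  | succ n ih =>
    show (cond (b n) 1 0) * 2^n + bitSum b n < 2^(n+1)
    have : (cond (b n) 1 0) ≤ 1 := by cases b n <;> simp
    have h2 : (cond (b n) 1 0) * 2^n ≤ 2^n := by
      calc (cond (b n) 1 0) * 2^n ≤ 1 * 2^n := Nat.mul_le_mul_right _ this
      _ = 2^n := one_mul _
    have : 2^(n+1) = 2^n + 2^n := by ring
    omega

lemma testBit_bitSum (b : ℕ → Bool) (n t : ℕ) (ht : t < n) :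
    (bitSum b n).testBit t = b t := by
  induction n with
  | zero => omega
  | succ n ih =>
    show ((cond (b n) 1 0) * 2^n + bitSum b n).testBit t = b t
    rw [mul_comm, Nat.testBit_two_pow_mul_add _ (bitSum_lt b n)]
    rcases lt_or_eq_of_le (Nat.lt_succ_iff.mp ht) with h | h
    · rw [if_pos h]; exact ih h
    · subst h; rw [if_neg (lt_irrefl t)]
      simp only [Nat.sub_self]
      cases b t <;> simp

lemma eN_testBit {S : Set ℕ} {n i : ℕ} (hi : i < n) :
    ((eN S n).testBit (n - 1 - i) = true) ↔ i ∈ S := by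
  rw [eN, testBit_bitSum _ _ _ (by omega)]
  have : n - 1 - (n - 1 - i) = i := by omega
  rw [this, decide_eq_true_iff]

lemma eN_candidates {S : Set ℕ} {n : ℕ} {A B : ℝ} (hA : A < enc S) (hB : enc S < B)
    (hlen : B - A ≤ (1/2)^(n+1)) :
    eN S n = (⌊2^n * A⌋).toNat ∨ eN S n = (⌊2^n * A⌋ + 1).toNat := by
  obtain ⟨hk1, hk2⟩ := enc_key S n
  set m := ⌊(2:ℝ)^n * A⌋ with hm
  have h2n : (0:ℝ) < 2^n := by positivity
  have hfl : (m:ℝ) ≤ 2^n * A := Int.floor_le _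
  have hfu : 2^n * A < m + 1 := Int.lt_floor_add_one _
  have hle : (m:ℝ) < (eN S n : ℝ) + 1 := by
    calc (m:ℝ) ≤ 2^n * A := hfl
    _ < 2^n * enc S := by nlinarith
    _ ≤ (eN S n : ℝ) + 1 := hk2
  have hge : (eN S n : ℝ) < (m:ℝ) + 2 := by
    have hBA : 2^n * B ≤ 2^n * A + 1/2 := by
      have : (2:ℝ)^n * (1/2)^(n+1) = 1/2 := by
        rw [pow_succ, ← mul_assoc, ← mul_pow]; norm_num
      nlinarith
    calc (eN S n : ℝ) ≤ 2^n * enc S := hk1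
    _ < 2^n * B := by nlinarith
    _ ≤ 2^n * A + 1/2 := hBA
    _ < (m:ℝ) + 2 := by linarith
  have h1 : (m:ℤ) ≤ eN S n := by exact_mod_cast Int.lt_add_one_iff.mp (by exact_mod_cast hle)
  have h2 : (eN S n : ℤ) ≤ m + 1 := by
    have := hge
    have h3 : (eN S n : ℤ) < m + 2 := by
      have h4 : ((eN S n : ℤ) : ℝ) < ((m + 2 : ℤ) : ℝ) := by push_cast; push_cast at this; linarith
      exact_mod_cast h4
    omega
  omega

def cellF (j0 j1 n : ℕ) (s : Finset ℕ) (b : Bool × Bool) : Finset ℕ :=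
  s.filter (fun i => (j0.testBit (n-1-i), j1.testBit (n-1-i)) = b)

lemma exists_big_cell (j0 j1 n : ℕ) (s : Finset ℕ) :
    ∃ b, s.card ≤ 4 * (cellF j0 j1 n s b).card := by
  have htot : s.card = ∑ b ∈ (Finset.univ : Finset (Bool × Bool)),
      (cellF j0 j1 n s b).card := by
    exact Finset.card_eq_sum_card_fiberwise (fun i _ => Finset.mem_univ _)
  by_contra h
  push_neg at h
  have hlt : 4 * ∑ b ∈ (Finset.univ : Finset (Bool × Bool)), (cellF j0 j1 n s b).card
      < ∑ _b ∈ (Finset.univ : Finset (Bool × Bool)), s.card := by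
    rw [Finset.mul_sum]
    apply Finset.sum_lt_sum_of_nonempty Finset.univ_nonempty
    intro b _
    exact h b
  rw [Finset.sum_const, ← htot] at hlt
  simp only [Finset.card_univ] at hlt
  have : Fintype.card (Bool × Bool) = 4 := by simp
  rw [this, smul_eq_mul] at hlt
  omega

lemma cellF_subset (j0 j1 n : ℕ) (s : Finset ℕ) (b : Bool × Bool) :
    cellF j0 j1 n s b ⊆ s := Finset.filter_subset _ _

lemma cellF_bits {j0 j1 n : ℕ} {s : Finset ℕ} {b : Bool × Bool} {i : ℕ}
    (hi : i ∈ cellF j0 j1 n s b) :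
    j0.testBit (n-1-i) = b.1 ∧ j1.testBit (n-1-i) = b.2 := by
  have := (Finset.mem_filter.mp hi).2
  exact ⟨by rw [← this], by rw [← this]⟩

lemma Iio_ncard (n : ℕ) : (Set.Iio n).ncard = n := by
  rw [← Finset.coe_Iio, Set.ncard_coe_finset, Nat.card_Iio]

lemma ncard_inter_Iio_le (S : Set ℕ) (n : ℕ) : (S ∩ Set.Iio n).ncard ≤ n := by
  calc (S ∩ Set.Iio n).ncard ≤ (Set.Iio n).ncard :=
        Set.ncard_le_ncard Set.inter_subset_right (Set.finite_Iio n)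
  _ = n := Iio_ncard n

lemma moderate_bounds {S : Set ℕ} (h : Moderate S) :
    ∃ a bb : ℝ, 0 < a ∧ 1/2 ≤ bb ∧ bb < 1 ∧
      ∀ᶠ n in atTop, a ≤ ((S ∩ Set.Iio n).ncard : ℝ) / n ∧
        ((S ∩ Set.Iio n).ncard : ℝ) / n ≤ bb := by
  set d := fun n : ℕ => ((S ∩ Set.Iio n).ncard : ℝ) / n with hd
  have hd0 : ∀ n, 0 ≤ d n := fun n => by positivity
  have hd1 : ∀ n, d n ≤ 1 := by
    intro n
    rcases Nat.eq_zero_or_pos n with h0 | h0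
    · simp [hd, h0]
    · rw [hd]
      apply div_le_one_of_le₀
      · exact_mod_cast ncard_inter_Iio_le S n
      · positivity
  have hbdd_ge : IsBoundedUnder (· ≥ ·) atTop d :=
    isBoundedUnder_of ⟨0, hd0⟩
  have hbdd_le : IsBoundedUnder (· ≤ ·) atTop d :=
    isBoundedUnder_of ⟨1, hd1⟩
  obtain ⟨hl, hu⟩ := h
  refine ⟨liminf d atTop / 2, max ((limsup d atTop + 1)/2) (1/2),
    by linarith, le_max_right _ _, ?_, ?_⟩
  · apply max_lt _ (by norm_num)
    linarith
  · have h1 : ∀ᶠ n in atTop, liminf d atTop / 2 < d n :=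
      eventually_lt_of_lt_liminf (by linarith) hbdd_ge
    have h2 : ∀ᶠ n in atTop, d n < (limsup d atTop + 1)/2 :=
      eventually_lt_of_limsup_lt (by linarith) hbdd_le
    filter_upwards [h1, h2] with n ha hb
    exact ⟨ha.le, le_max_of_le_left hb.le⟩

lemma arith_full {bb kR u v xx s cS nR : ℝ} (hbb0 : 0 < bb) (hb1 : bb < 1)
    (hv0 : 0 ≤ v) (hu0 : 0 ≤ u)
    (hvR : (kR+1)*v ≤ u) (hxxR : xx = v + u) (hcslR : u ≤ cS)
    (hbig1 : (1+bb)*(kR+2) ≤ 2*(kR+1)) (hsu : s ≤ bb*nR) (hn0R : 0 < nR)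
    (hk1 : 0 < kR + 1) :
    (1 + (1-bb)/(2*bb)) * (s * xx) ≤ nR * cS := by
  have hxx0 : 0 ≤ xx := by rw [hxxR]; linarith
  have hδb : (1 + (1-bb)/(2*bb)) * bb = (1+bb)/2 := by field_simp; ring
  have step1 : (1+bb) * xx ≤ 2 * cS := by
    have e1 : (kR+1) * ((1+bb) * xx) ≤ (1+bb) * ((kR+2) * u) := by nlinarith
    have e2 : (1+bb) * ((kR+2) * u) ≤ 2*(kR+1) * u := by nlinarith
    have e3 : 2*(kR+1)*u ≤ 2*(kR+1)*cS := by nlinarith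
    nlinarith
  have step2 : (1 + (1-bb)/(2*bb)) * (s * xx) ≤ (1+bb)/2 * (nR * xx) := by
    have hδ0 : 0 < 1 + (1-bb)/(2*bb) := by
      have : 0 ≤ (1-bb)/(2*bb) := div_nonneg (by linarith) (by linarith)
      linarith
    calc (1 + (1-bb)/(2*bb)) * (s * xx) ≤ (1 + (1-bb)/(2*bb)) * ((bb*nR) * xx) := by
          apply mul_le_mul_of_nonneg_left _ hδ0.le
          apply mul_le_mul_of_nonneg_right hsu hxx0
    _ = ((1 + (1-bb)/(2*bb)) * bb) * (nR * xx) := by ring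
    _ = (1+bb)/2 * (nR * xx) := by rw [hδb]
  calc (1 + (1-bb)/(2*bb)) * (s * xx) ≤ (1+bb)/2 * (nR * xx) := step2
  _ = nR/2 * ((1+bb) * xx) := by ring
  _ ≤ nR/2 * (2 * cS) := by
      apply mul_le_mul_of_nonneg_left step1 (by positivity)
  _ = nR * cS := by ring

lemma arith_empty {aa kR xx s cS nR : ℝ} (ha0 : 0 < aa)
    (hvu : (kR+1)*cS ≤ xx) (hsl : aa*nR ≤ s) (hbig2 : 2 ≤ aa*(kR+1))
    (hn0R : 0 < nR) (hcs0 : 0 ≤ cS) (hk1 : 0 < kR + 1) :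
    2 * (nR * cS) ≤ s * xx := by
  have hxx0 : 0 ≤ xx := le_trans (by positivity) hvu
  have h1 : (aa * nR) * ((kR+1) * cS) ≤ s * xx :=
    mul_le_mul hsl hvu (by positivity) (le_trans (by positivity) hsl)
  have h2 : 0 ≤ nR * cS := by positivity
  have h3 : 2 * (nR * cS) ≤ (aa * (kR+1)) * (nR * cS) :=
    mul_le_mul_of_nonneg_right hbig2 h2
  have h4 : (aa * (kR+1)) * (nR * cS) = (aa * nR) * ((kR+1) * cS) := by ring
  linarith

lemma exists_defeater (Z : Set ℝ) (hZ : HasSMZ Z) :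
    ∃ X : Set ℕ, X.Infinite ∧ ∀ S : Set ℕ, Moderate S → enc S ∈ Z →
      ¬ Tendsto (statRatio S X) atTop (nhds 1) := by
  classical
  -- covers
  choose A B hlen hcov using fun p : ℕ =>
    hZ (fun m => hf (Nsc (Nat.pair p m + 1))) (fun m => hf_pos _)
  set a : ℕ → ℝ := fun k => A (Nat.unpair k).1 (Nat.unpair k).2 with ha
  set b : ℕ → ℝ := fun k => B (Nat.unpair k).1 (Nat.unpair k).2 with hb
  have hlen' : ∀ k, b k - a k ≤ (1/2)^(Nsc (k+1) + 1) := by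
    intro k
    have := hlen (Nat.unpair k).1 (Nat.unpair k).2
    rwa [Nat.pair_unpair, hf] at this
  have hio : ∀ x ∈ Z, ∀ p, ∃ k, p ≤ k ∧ x ∈ Set.Ioo (a k) (b k) := by
    intro x hx p
    obtain ⟨t, ht⟩ := Set.mem_iUnion.mp (hcov p hx)
    refine ⟨Nat.pair p t, Nat.left_le_pair p t, ?_⟩
    simpa [ha, hb, Nat.unpair_pair] using ht
  -- candidates and cells
  set j0 : ℕ → ℕ := fun k => (⌊2^(Nsc (k+1)) * a k⌋).toNat with hj0
  set j1 : ℕ → ℕ := fun k => (⌊2^(Nsc (k+1)) * a k⌋ + 1).toNat with hj1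
  set blkF : ℕ → Finset ℕ := fun k => Finset.Ico (Nsc k) (Nsc (k+1)) with hblkF
  choose cb hcb using fun k => exists_big_cell (j0 k) (j1 k) (Nsc (k+1)) (blkF k)
  set Xk : ℕ → Finset ℕ := fun k => cellF (j0 k) (j1 k) (Nsc (k+1)) (blkF k) (cb k) with hXk
  set X : Set ℕ := ⋃ k, (Xk k : Set ℕ) with hX
  -- basic block facts
  have hP1 : ∀ k, ∀ i ∈ Xk k, Nsc k ≤ i ∧ i < Nsc (k+1) := by
    intro k i hi
    have := cellF_subset (j0 k) (j1 k) (Nsc (k+1)) (blkF k) (cb k) hi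
    exact Finset.mem_Ico.mp this
  have hP2 : ∀ k, (k+1) * Nsc k ≤ (Xk k).card := by
    intro k
    have h1 : 4*((k+1)*Nsc k) ≤ (blkF k).card := by
      rw [hblkF]
      simp only [Nat.card_Ico]
      have := Nsc_block k
      omega
    have h2 : (blkF k).card ≤ 4 * (Xk k).card := hcb k
    omega
  have hXkne : ∀ k, ∃ i, i ∈ Xk k := by
    intro k
    have := hP2 k
    have h0 := Nsc_pos k
    have : 0 < (Xk k).card := by nlinarith
    obtain ⟨i, hi⟩ := Finset.card_pos.mp this
    exact ⟨i, hi⟩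
  have hXinf : X.Infinite := by
    apply Set.infinite_of_not_bddAbove
    rintro ⟨u, hu⟩
    obtain ⟨i, hi⟩ := hXkne (u+1)
    have h1 : u + 2 ≤ i := le_trans (le_Nsc (u+1)) (hP1 _ _ hi).1
    have h2 : i ≤ u := hu (Set.mem_iUnion.mpr ⟨u+1, hi⟩)
    omega
  -- decomposition of X below scales
  have hP3 : ∀ k, X ∩ Set.Iio (Nsc (k+1)) = (X ∩ Set.Iio (Nsc k)) ∪ (Xk k : Set ℕ) := by
    intro k
    ext i
    simp only [Set.mem_inter_iff, Set.mem_union, Set.mem_Iio, hX, Set.mem_iUnion]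
    constructor
    · rintro ⟨⟨j, hj⟩, hlt⟩
      rcases lt_trichotomy j k with h | h | h
      · left
        exact ⟨⟨j, hj⟩, lt_of_lt_of_le (hP1 _ _ hj).2 (Nsc_strictMono.monotone h)⟩
      · right; rw [← h]; exact hj
      · exfalso
        have := (hP1 _ _ hj).1
        have h2 : Nsc (k+1) ≤ Nsc j := Nsc_strictMono.monotone (by omega : k + 1 ≤ j)
        omega
    · rintro (⟨⟨j, hj⟩, hlt⟩ | hj)
      · exact ⟨⟨j, hj⟩, lt_trans hlt (Nsc_lt_succ k)⟩
      · exact ⟨⟨k, hj⟩, (hP1 _ _ hj).2⟩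
  refine ⟨X, hXinf, ?_⟩
  intro S hMod hencZ hT
  obtain ⟨aa, bb, ha0, hbhalf, hb1, hev⟩ := moderate_bounds hMod
  set δ := (1 - bb)/(2*bb) with hδdef
  have hbb0 : (0:ℝ) < bb := by linarith
  have hδ : 0 < δ := by apply div_pos <;> linarith
  set ε := min (1/2 : ℝ) δ with hεdef
  have hε : 0 < ε := lt_min (by norm_num) hδ
  have hT' : ∀ᶠ n in atTop, |statRatio S X n - 1| < ε := by
    have := hT (Metric.ball_mem_nhds (1:ℝ) hε)
    rw [Filter.mem_map] at this
    filter_upwards [this] with n hn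
    simpa [Real.dist_eq] using hn
  obtain ⟨K, hK⟩ := Filter.eventually_atTop.mp (hev.and hT')
  obtain ⟨k2, hk2⟩ := exists_nat_ge (2/(1-bb))
  obtain ⟨k3, hk3⟩ := exists_nat_ge (2/aa)
  set p := max K (max k2 k3) with hp
  obtain ⟨k, hpk, hxio⟩ := hio (enc S) hencZ p
  set n := Nsc (k+1) with hn
  have hkK : K ≤ k := le_trans (le_max_left _ _) hpk
  have hkk2 : k2 ≤ k := le_trans (le_trans (le_max_left _ _) (le_max_right _ _)) hpk
  have hkk3 : k3 ≤ k := le_trans (le_trans (le_max_right _ _) (le_max_right _ _)) hpk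
  have hnK : K ≤ n := by
    have := le_Nsc (k+1)
    omega
  obtain ⟨⟨hda, hdb⟩, hrat⟩ := hK n hnK
  -- arithmetic consequences of k large
  have hbig1 : (1 + bb) * (k + 2 : ℝ) ≤ 2 * (k + 1) := by
    have h1 : (2:ℝ) ≤ (1 - bb) * k2 := by
      rw [div_le_iff₀ (by linarith)] at hk2
      linarith
    have h2 : (k2:ℝ) ≤ k := by exact_mod_cast hkk2
    nlinarith
  have hbig2 : (2:ℝ) ≤ aa * (k + 1) := by
    have h1 : (2:ℝ) ≤ aa * k3 := by
      rw [div_le_iff₀ ha0] at hk3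
      linarith
    have h2 : (k3:ℝ) ≤ k := by exact_mod_cast hkk3
    nlinarith
  -- candidate identification
  have hecand : eN S n = j0 k ∨ eN S n = j1 k :=
    eN_candidates hxio.1 hxio.2 (hlen' k)
  -- dichotomy: S ∩ Xk k is everything or nothing
  have hdichot : ((Xk k : Set ℕ) ⊆ S) ∨ (S ∩ (Xk k : Set ℕ) = ∅) := by
    have hbitS : ∃ c : Bool, ∀ i ∈ Xk k, (i ∈ S ↔ c = true) := by
      rcases hecand with he | he
      · refine ⟨(cb k).1, fun i hi => ?_⟩
        have hiN : i < n := (hP1 k i hi).2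
        have hbit := (cellF_bits hi).1
        have hmem := eN_testBit (S := S) hiN
        rw [he] at hmem
        rw [← hmem, hbit]
      · refine ⟨(cb k).2, fun i hi => ?_⟩
        have hiN : i < n := (hP1 k i hi).2
        have hbit := (cellF_bits hi).2
        have hmem := eN_testBit (S := S) hiN
        rw [he] at hmem
        rw [← hmem, hbit]
    obtain ⟨c, hc⟩ := hbitS
    cases c with
    | true =>
      left
      intro i hi
      exact (hc i hi).mpr rfl
    | false =>
      right
      ext i
      simp only [Set.mem_inter_iff, Set.mem_empty_iff_false, iff_false, not_and]
      intro hiS hiXk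
      exact absurd ((hc i hiXk).mp hiS) (by simp)
  -- counting
  have hinterfin : ∀ (T : Set ℕ) (m : ℕ), (T ∩ Set.Iio m).Finite :=
    fun T m => Set.Finite.inter_of_right (Set.finite_Iio m) T
  set u := (Xk k).card with hu_def
  set v := (X ∩ Set.Iio (Nsc k)).ncard with hv_def
  set xx := (X ∩ Set.Iio n).ncard with hxx_def
  set s := (S ∩ Set.Iio n).ncard with hs_def
  set cS := (S ∩ X ∩ Set.Iio n).ncard with hcS_def
  have hvle : v ≤ Nsc k := ncard_inter_Iio_le X (Nsc k)
  have hxxeq : xx = v + u := by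
    have hdisj2 : Disjoint (X ∩ Set.Iio (Nsc k)) (Xk k : Set ℕ) := by
      rw [Set.disjoint_left]
      rintro i ⟨_, hilt⟩ hiXk
      have := (hP1 k i hiXk).1
      simp only [Set.mem_Iio] at hilt
      omega
    rw [hxx_def, hn, hP3 k, Set.ncard_union_eq hdisj2 (hinterfin X (Nsc k))
      (Xk k).finite_toSet, Set.ncard_coe_finset]
  have hun : (k+1) * Nsc k ≤ u := hP2 k
  have hn0 : 0 < n := Nsc_pos (k+1)
  have hn0R : (0:ℝ) < n := by exact_mod_cast hn0
  have hsl : aa * n ≤ (s : ℝ) := by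
    rw [le_div_iff₀ hn0R] at hda
    exact hda
  have hsu : (s : ℝ) ≤ bb * n := by
    rw [div_le_iff₀ hn0R] at hdb
    exact hdb
  have hs_pos : (0:ℝ) < s := lt_of_lt_of_le (by positivity) hsl
  have hu_pos : 0 < u := by
    have := Nsc_pos k
    nlinarith
  have hxx_pos : (0:ℝ) < xx := by
    have : 0 < xx := by omega
    exact_mod_cast this
  have hrdef : statRatio S X n = ((n:ℝ) * cS) / ((s:ℝ) * xx) := rfl
  have habs := abs_lt.mp hrat
  have hεhalf : ε ≤ 1/2 := min_le_left _ _
  have hεδ : ε ≤ δ := min_le_right _ _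
  rcases hdichot with hsub | hdisj
  · -- full case : ratio ≥ 1 + δ
    have hcsl : u ≤ cS := by
      have hucoe : u = (Xk k : Set ℕ).ncard := (Set.ncard_coe_finset (Xk k)).symm
      rw [hcS_def, hucoe]
      apply Set.ncard_le_ncard _ (hinterfin _ n)
      intro i hi
      exact ⟨⟨hsub hi, Set.mem_iUnion.mpr ⟨k, hi⟩⟩, Set.mem_Iio.mpr (hP1 k i hi).2⟩
    have hcsu : cS ≤ xx := by
      apply Set.ncard_le_ncard _ (hinterfin X n)
      rintro i ⟨⟨_, hiX⟩, hilt⟩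
      exact ⟨hiX, hilt⟩
    -- real arithmetic
    have hvR : ((k:ℝ)+1) * v ≤ u := by
      have h1 : (k+1) * v ≤ (k+1) * Nsc k := Nat.mul_le_mul_left _ hvle
      have h2 : (k+1) * v ≤ u := le_trans h1 hun
      exact_mod_cast h2
    have hxxR : (xx:ℝ) = v + u := by exact_mod_cast hxxeq
    have hcslR : (u:ℝ) ≤ cS := by exact_mod_cast hcsl
    have key : 1 + δ ≤ statRatio S X n := by
      rw [hrdef, le_div_iff₀ (mul_pos hs_pos hxx_pos), hδdef]
      exact arith_full hbb0 hb1 (Nat.cast_nonneg _) (Nat.cast_nonneg _)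
        hvR hxxR hcslR hbig1 hsu hn0R (by positivity)
    linarith
  · -- empty case : ratio ≤ 1/2
    have hcsv : cS ≤ v := by
      apply Set.ncard_le_ncard _ (hinterfin X (Nsc k))
      rintro i ⟨⟨hiS, hiX⟩, hilt⟩
      have hiX' : i ∈ X ∩ Set.Iio n := ⟨hiX, hilt⟩
      rw [hn, hP3 k] at hiX'
      rcases hiX' with h | h
      · exact h
      · exfalso
        have : i ∈ S ∩ (Xk k : Set ℕ) := ⟨hiS, h⟩
        rw [hdisj] at this
        exact this
    have key : statRatio S X n ≤ 1/2 := by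
      rw [hrdef, div_le_iff₀ (mul_pos hs_pos hxx_pos)]
      have hvu : ((k:ℝ)+1) * cS ≤ xx := by
        have h1 : (k+1) * cS ≤ (k+1) * Nsc k := Nat.mul_le_mul_left _ (le_trans hcsv hvle)
        have h2 : (k+1) * cS ≤ xx := by
          have := hun
          omega
        exact_mod_cast h2
      have := arith_empty ha0 hvu hsl hbig2 hn0R (Nat.cast_nonneg _) (by positivity)
      linarith
    have h0 : 0 ≤ statRatio S X n := by
      rw [hrdef]
      positivity
    linarith

lemma singleton_hasSMZ (x : ℝ) : HasSMZ {x} := by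
  intro ε hε
  refine ⟨fun n => x - ε n/4, fun n => x + ε n/4, fun n => by linarith [hε n], ?_⟩
  intro y hy
  rw [Set.mem_singleton_iff] at hy
  subst hy
  apply Set.mem_iUnion.mpr ⟨0, ?_⟩
  constructor <;> simp <;> linarith [hε 0]

lemma rStar_le_covSMZ_aux : rStar ≤ covSMZ := by
  classical
  have hne : {c : Cardinal | ∃ C : Set (Set ℝ), (∀ Z ∈ C, HasSMZ Z) ∧
      ⋃₀ C = Set.univ ∧ #C = c}.Nonempty := by
    refine ⟨#(Set.range (fun x : ℝ => ({x} : Set ℝ))),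
      Set.range (fun x : ℝ => ({x} : Set ℝ)), ?_, ?_, rfl⟩
    · rintro Z ⟨x, rfl⟩
      exact singleton_hasSMZ x
    · apply Set.eq_univ_iff_forall.mpr
      intro y
      exact ⟨{y}, ⟨y, rfl⟩, rfl⟩
  have hmem : ∃ C : Set (Set ℝ), (∀ Z ∈ C, HasSMZ Z) ∧
      ⋃₀ C = Set.univ ∧ #C = covSMZ := csInf_mem hne
  obtain ⟨C, hC1, hC2, hC3⟩ := hmem
  choose XZ hXZ1 hXZ2 using fun Z : C => exists_defeater Z.1 (hC1 Z.1 Z.2)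
  set F : Set (Set ℕ) := Set.range XZ with hFdef
  have hF : #F ≤ covSMZ := by
    rw [← hC3]
    exact Cardinal.mk_range_le
  have hmemr : #F ∈ {c : Cardinal | ∃ F : Set (Set ℕ), (∀ X ∈ F, X.Infinite) ∧
      (¬ ∃ S : Set ℕ, S.Infinite ∧ Moderate S ∧
        ∀ X ∈ F, Tendsto (statRatio S X) atTop (nhds 1)) ∧ #F = c} := by
    refine ⟨F, ?_, ?_, rfl⟩
    · rintro x ⟨Z, rfl⟩
      exact hXZ1 Z
    · rintro ⟨S, hSinf, hSmod, hSall⟩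
      have hz : enc S ∈ ⋃₀ C := by rw [hC2]; trivial
      obtain ⟨Z, hZC, hzin⟩ := hz
      exact hXZ2 ⟨Z, hZC⟩ S hSmod hzin (hSall _ ⟨⟨Z, hZC⟩, rfl⟩)
  calc rStar ≤ #F := csInf_le' hmemr
  _ ≤ covSMZ := hF

/-- `𝔯_* ≤ cov(𝒮𝒩)`. -/
theorem rStar_le_covSMZ : rStar ≤ covSMZ := by
  exact rStar_le_covSMZ_aux
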